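/- In the fast function forcing poset F_κ (conditions: partial functions p ⊆ κ × κ whose domain consists of inaccessible cardinals γ with p''γ ⊆ γ, and such that |p↾γ| < γ for every inaccessible γ ≤ κ, ordered by reverse inclusion), for any fixed condition p = {(γ, δ)} with γ inaccessible, the cone F_κ↾p is isomorphic to F_γ × F_{[λ,κ)}, where λ is the least inaccessible above max(γ, δ) and F_{[λ,κ)} = { p ∈ F_κ : dom(p) ⊆ [λ, κ) }. -/

import Mathlib

/-!
Fast function forcing `F_κ`: conditions are partial functions `p ⊆ κ × κ`
(rendered as functional sets of pairs of ordinals) such that (1) every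
`γ ∈ dom(p)` is inaccessible and `p''γ ⊆ γ`, and (2) `|p↾γ| < γ` for every
inaccessible `γ ≤ κ`; the order is reverse inclusion.  For a fixed condition
`p = {(γ, δ)}` with `γ` inaccessible, the cone `F_κ↾p` is isomorphic to
`F_γ × F_{[λ,κ)}`, where `λ` is the least inaccessible above `max(γ, δ)` and
`F_{[λ,κ)} = { q ∈ F_κ : dom(q) ⊆ [λ, κ) }`; the isomorphism sends `q ≤ p` to
`(q↾γ, q↾[λ,κ))`.
-/

/-- `γ` is an inaccessible ordinal, i.e. the ordinal of an inaccessible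
cardinal. -/
def IsInaccOrd (γ : Ordinal) : Prop :=
  γ.card.IsInaccessible ∧ γ.card.ord = γ

/-- A condition of fast function forcing `F_κ`. -/
structure FastFn (κ : Ordinal) where
  carrier : Set (Ordinal × Ordinal)
  isFunc : ∀ ⦃a b c : Ordinal⦄, (a, b) ∈ carrier → (a, c) ∈ carrier → b = c
  mem_lt : ∀ ⦃x⦄, x ∈ carrier → x.1 < κ ∧ x.2 < κ
  dom_inacc : ∀ ⦃a b : Ordinal⦄, (a, b) ∈ carrier → IsInaccOrd a
  image_lt : ∀ ⦃a b c d : Ordinal⦄, (a, b) ∈ carrier → (c, d) ∈ carrier →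
    c < a → d < a
  small : ∀ γ : Ordinal, γ ≤ κ → IsInaccOrd γ →
    Cardinal.mk {x : Ordinal × Ordinal // x ∈ carrier ∧ x.1 < γ} <
      Cardinal.lift.{1, 0} γ.card

/-- Fast function conditions are ordered by reverse inclusion. -/
instance {κ : Ordinal} : LE (FastFn κ) :=
  ⟨fun p q => q.carrier ⊆ p.carrier⟩

namespace FastFnAux

theorem ext' {κ : Ordinal} {p q : FastFn κ} (h : p.carrier = q.carrier) : p = q := by
  cases p; cases q; simp_all

theorem card_lt_card {γ μ : Ordinal} (hγ : IsInaccOrd γ) (hμ : IsInaccOrd μ) (h : γ < μ) :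
    γ.card < μ.card := by
  rcases lt_or_ge γ.card μ.card with h' | h'
  · exact h'
  · have := Cardinal.ord_le_ord.mpr h'
    rw [hγ.2, hμ.2] at this
    exact absurd h (not_lt.mpr this)

theorem aleph0_le_lift {μ : Ordinal} (hμ : IsInaccOrd μ) :
    (Cardinal.aleph0 : Cardinal.{1}) ≤ Cardinal.lift.{1, 0} μ.card := by
  rw [← Cardinal.lift_aleph0.{1, 0}]
  exact Cardinal.lift_le.mpr hμ.1.1.le

variable {κ γ δ lam : Ordinal}

/-- restriction below γ -/
def low (hγ : IsInaccOrd γ) (hγκ : γ ≤ κ) (q : FastFn κ) (hq : (γ, δ) ∈ q.carrier) :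
    FastFn γ where
  carrier := {x | x ∈ q.carrier ∧ x.1 < γ}
  isFunc := fun _ _ _ hb hc => q.isFunc hb.1 hc.1
  mem_lt := fun x hx => ⟨hx.2, q.image_lt hq hx.1 hx.2⟩
  dom_inacc := fun _ _ h => q.dom_inacc h.1
  image_lt := fun _ _ _ _ h h' => q.image_lt h.1 h'.1
  small := fun μ hμγ hμ => by
    have hsub : {x : Ordinal × Ordinal | (x ∈ q.carrier ∧ x.1 < γ) ∧ x.1 < μ} ⊆
        {x | x ∈ q.carrier ∧ x.1 < μ} := fun x hx => ⟨hx.1.1, hx.2⟩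
    exact lt_of_le_of_lt (Cardinal.mk_le_mk_of_subset hsub) (q.small μ (hμγ.trans hγκ) hμ)

/-- restriction above lam -/
def high (q : FastFn κ) : FastFn κ where
  carrier := {x | x ∈ q.carrier ∧ lam ≤ x.1}
  isFunc := fun _ _ _ hb hc => q.isFunc hb.1 hc.1
  mem_lt := fun _ hx => q.mem_lt hx.1
  dom_inacc := fun _ _ h => q.dom_inacc h.1
  image_lt := fun _ _ _ _ h h' => q.image_lt h.1 h'.1
  small := fun μ hμκ hμ => by
    have hsub : {x : Ordinal × Ordinal | (x ∈ q.carrier ∧ lam ≤ x.1) ∧ x.1 < μ} ⊆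
        {x | x ∈ q.carrier ∧ x.1 < μ} := fun x hx => ⟨hx.1.1, hx.2⟩
    exact lt_of_le_of_lt (Cardinal.mk_le_mk_of_subset hsub) (q.small μ hμκ hμ)

theorem trichotomy (hlam_least : ∀ μ : Ordinal, IsInaccOrd μ → max γ δ < μ → lam ≤ μ)
    (q : FastFn κ) (hq : (γ, δ) ∈ q.carrier) {x : Ordinal × Ordinal}
    (hx : x ∈ q.carrier) : x.1 < γ ∨ x = (γ, δ) ∨ lam ≤ x.1 := by
  have hx' : (x.1, x.2) ∈ q.carrier := hx
  rcases lt_trichotomy x.1 γ with h | h | h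
  · exact Or.inl h
  · refine Or.inr (Or.inl ?_)
    have h2 : (γ, x.2) ∈ q.carrier := h ▸ hx'
    exact Prod.ext h (q.isFunc h2 hq)
  · have hδ : δ < x.1 := q.image_lt hx' hq h
    exact Or.inr (Or.inr (hlam_least x.1 (q.dom_inacc hx') (max_lt h hδ)))

def glue (hγ : IsInaccOrd γ) (hγκ : γ < κ) (hδκ : δ < κ)
    (hγlam : γ < lam) (hδlam : δ < lam)
    (r : FastFn γ) (s : FastFn κ) (hs : ∀ x ∈ s.carrier, lam ≤ x.1) : FastFn κ where
  carrier := r.carrier ∪ ({(γ, δ)} ∪ s.carrier)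
  isFunc := by
    rintro a b c (hb | hb | hb) (hc | hc | hc)
    · exact r.isFunc hb hc
    · have h1 : a = γ := congrArg Prod.fst (show (a, c) = (γ, δ) from hc)
      subst h1
      exact absurd (r.mem_lt hb).1 (lt_irrefl a)
    · exact absurd (r.mem_lt hb).1 (not_lt.mpr (hγlam.le.trans (hs (a, c) hc)))
    · have h1 : a = γ := congrArg Prod.fst (show (a, b) = (γ, δ) from hb)
      subst h1
      exact absurd (r.mem_lt hc).1 (lt_irrefl a)
    · have h2 : b = δ := congrArg Prod.snd (show (a, b) = (γ, δ) from hb)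
      have h3 : c = δ := congrArg Prod.snd (show (a, c) = (γ, δ) from hc)
      rw [h2, h3]
    · have h1 : a = γ := congrArg Prod.fst (show (a, b) = (γ, δ) from hb)
      exact absurd (hs (a, c) hc) (h1 ▸ not_le.mpr hγlam)
    · exact absurd (r.mem_lt hc).1 (not_lt.mpr (hγlam.le.trans (hs (a, b) hb)))
    · have h1 : a = γ := congrArg Prod.fst (show (a, c) = (γ, δ) from hc)
      exact absurd (hs (a, b) hb) (h1 ▸ not_le.mpr hγlam)
    · exact s.isFunc hb hc
  mem_lt := by
    rintro x (hx | hx | hx)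
    · exact ⟨(r.mem_lt hx).1.trans hγκ, (r.mem_lt hx).2.trans hγκ⟩
    · rw [hx]; exact ⟨hγκ, hδκ⟩
    · exact s.mem_lt hx
  dom_inacc := by
    rintro a b (h | h | h)
    · exact r.dom_inacc h
    · rw [((Prod.mk.injEq _ _ _ _).mp h).1]; exact hγ
    · exact s.dom_inacc h
  image_lt := by
    rintro a b c d (ha | ha | ha) (hc | hc | hc) hlt
    · exact r.image_lt ha hc hlt
    · have h1 : c = γ := congrArg Prod.fst (show (c, d) = (γ, δ) from hc)
      exact absurd hlt (h1 ▸ not_lt.mpr (r.mem_lt ha).1.le)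
    · exact absurd hlt (not_lt.mpr (((r.mem_lt ha).1.le.trans hγlam.le).trans (hs (c, d) hc)))
    · have h1 : a = γ := congrArg Prod.fst (show (a, b) = (γ, δ) from ha)
      subst h1
      exact (r.mem_lt hc).2
    · have h1 : a = γ := congrArg Prod.fst (show (a, b) = (γ, δ) from ha)
      have h2 : c = γ := congrArg Prod.fst (show (c, d) = (γ, δ) from hc)
      rw [h1, h2] at hlt
      exact absurd hlt (lt_irrefl γ)
    · have h1 : a = γ := congrArg Prod.fst (show (a, b) = (γ, δ) from ha)
      exact absurd hlt (h1 ▸ not_lt.mpr (hγlam.le.trans (hs (c, d) hc)))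
    · exact (r.mem_lt hc).2.trans (hγlam.trans_le (hs (a, b) ha))
    · have h2 : d = δ := congrArg Prod.snd (show (c, d) = (γ, δ) from hc)
      rw [h2]
      exact hδlam.trans_le (hs (a, b) ha)
    · exact s.image_lt ha hc hlt
  small := by
    intro μ hμκ hμ
    have hsub : {x : Ordinal × Ordinal |
        x ∈ r.carrier ∪ ({(γ, δ)} ∪ s.carrier) ∧ x.1 < μ} ⊆
        ({x | x ∈ r.carrier ∧ x.1 < μ} ∪
          (({(γ, δ)} : Set (Ordinal × Ordinal)) ∪ {x | x ∈ s.carrier ∧ x.1 < μ})) := by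
      rintro x ⟨hx | hx | hx, hlt⟩
      · exact Or.inl ⟨hx, hlt⟩
      · exact Or.inr (Or.inl hx)
      · exact Or.inr (Or.inr ⟨hx, hlt⟩)
    have h0 := aleph0_le_lift hμ
    have h1 : Cardinal.mk {x : Ordinal × Ordinal // x ∈ r.carrier ∧ x.1 < μ} <
        Cardinal.lift.{1, 0} μ.card := by
      rcases le_or_gt μ γ with h | h
      · exact r.small μ h hμ
      · have hsub2 : {x : Ordinal × Ordinal | x ∈ r.carrier ∧ x.1 < μ} ⊆
            {x | x ∈ r.carrier ∧ x.1 < γ} := fun x hx => ⟨hx.1, (r.mem_lt hx.1).1⟩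
        exact lt_of_le_of_lt (Cardinal.mk_le_mk_of_subset hsub2)
          ((r.small γ le_rfl hγ).trans (Cardinal.lift_lt.mpr (card_lt_card hγ hμ h)))
    have h2 : (1 : Cardinal.{1}) < Cardinal.lift.{1, 0} μ.card :=
      lt_of_lt_of_le Cardinal.one_lt_aleph0 h0
    have h3 : Cardinal.mk {x : Ordinal × Ordinal // x ∈ s.carrier ∧ x.1 < μ} <
        Cardinal.lift.{1, 0} μ.card := s.small μ hμκ hμ
    calc Cardinal.mk {x : Ordinal × Ordinal //
          x ∈ r.carrier ∪ ({(γ, δ)} ∪ s.carrier) ∧ x.1 < μ}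
        ≤ Cardinal.mk ↥({x : Ordinal × Ordinal | x ∈ r.carrier ∧ x.1 < μ} ∪
            (({(γ, δ)} : Set (Ordinal × Ordinal)) ∪ {x | x ∈ s.carrier ∧ x.1 < μ})) :=
          Cardinal.mk_le_mk_of_subset hsub
      _ ≤ Cardinal.mk {x : Ordinal × Ordinal | x ∈ r.carrier ∧ x.1 < μ} +
            Cardinal.mk ↥(({(γ, δ)} : Set (Ordinal × Ordinal)) ∪
              {x | x ∈ s.carrier ∧ x.1 < μ}) := Cardinal.mk_union_le _ _
      _ ≤ Cardinal.mk {x : Ordinal × Ordinal | x ∈ r.carrier ∧ x.1 < μ} +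
            (Cardinal.mk (({(γ, δ)} : Set (Ordinal × Ordinal))) +
              Cardinal.mk {x : Ordinal × Ordinal | x ∈ s.carrier ∧ x.1 < μ}) :=
          add_le_add_right (Cardinal.mk_union_le _ _) _
      _ < Cardinal.lift.{1, 0} μ.card := by
          refine Cardinal.add_lt_of_lt h0 h1 (Cardinal.add_lt_of_lt h0 ?_ h3)
          rw [Cardinal.mk_singleton]; exact h2

end FastFnAux

open FastFnAux in
theorem fastFn_cone_factorization
    (κ γ δ lam : Ordinal)
    (hκ : IsInaccOrd κ) (hγ : IsInaccOrd γ)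
    (hγκ : γ < κ) (hδκ : δ < κ)
    (hlam_inacc : IsInaccOrd lam) (hlam_gt : max γ δ < lam) (hlam_le : lam ≤ κ)
    (hlam_least : ∀ μ : Ordinal, IsInaccOrd μ → max γ δ < μ → lam ≤ μ)
    (p : FastFn κ) (hp : p.carrier = {(γ, δ)}) :
    ∃ e : {q : FastFn κ // q ≤ p} ≃o
        (FastFn γ × {q : FastFn κ // ∀ x ∈ q.carrier, lam ≤ x.1}),
      ∀ q : {q : FastFn κ // q ≤ p},
        (e q).1.carrier = {x | x ∈ q.1.carrier ∧ x.1 < γ} ∧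
        (e q).2.1.carrier = {x | x ∈ q.1.carrier ∧ lam ≤ x.1} := by
  have hγlam : γ < lam := (le_max_left γ δ).trans_lt hlam_gt
  have hδlam : δ < lam := (le_max_right γ δ).trans_lt hlam_gt
  have hmem : ∀ q : {q : FastFn κ // q ≤ p}, (γ, δ) ∈ q.1.carrier := by
    intro q
    exact q.2 (by rw [hp]; rfl)
  refine ⟨⟨⟨fun q =>
      (low (δ := δ) hγ hγκ.le q.1 (hmem q), ⟨high (lam := lam) q.1, fun x hx => hx.2⟩),
      fun rs => ⟨glue hγ hγκ hδκ hγlam hδlam rs.1 rs.2.1 rs.2.2,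
        fun x hx => Or.inr (Or.inl (show x ∈ ({(γ, δ)} : Set (Ordinal × Ordinal)) from hp ▸ hx))⟩,
      ?_, ?_⟩, ?_⟩, fun q => ⟨rfl, rfl⟩⟩
  · intro q
    refine Subtype.ext (ext' ?_)
    ext x
    constructor
    · rintro (hx | hx | hx)
      · exact hx.1
      · exact hx ▸ hmem q
      · exact hx.1
    · intro hx
      rcases trichotomy hlam_least q.1 (hmem q) hx with h | h | h
      · exact Or.inl ⟨hx, h⟩
      · exact Or.inr (Or.inl h)
      · exact Or.inr (Or.inr ⟨hx, h⟩)
  · rintro ⟨r, s, hs⟩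
    refine Prod.ext (ext' ?_) (Subtype.ext (ext' ?_))
    · ext x
      constructor
      · rintro ⟨hx | hx | hx, hlt⟩
        · exact hx
        · exact absurd hlt (by rw [hx]; exact lt_irrefl γ)
        · exact absurd hlt (not_lt.mpr (hγlam.le.trans (hs x hx)))
      · intro hx
        exact ⟨Or.inl hx, (r.mem_lt hx).1⟩
    · ext x
      constructor
      · rintro ⟨hx | hx | hx, hle⟩
        · exact absurd hle (not_le.mpr ((r.mem_lt hx).1.trans hγlam))
        · exact absurd hle (by rw [hx]; exact not_le.mpr hγlam)
        · exact hx
      · intro hx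
        exact ⟨Or.inr (Or.inr hx), hs x hx⟩
  · intro q q'
    constructor
    · rintro ⟨h1, h2⟩
      intro x hx
      rcases trichotomy hlam_least q'.1 (hmem q') hx with h | h | h
      · exact (h1 (show x ∈ {y : Ordinal × Ordinal | y ∈ q'.1.carrier ∧ y.1 < γ} from
          ⟨hx, h⟩)).1
      · exact h ▸ hmem q
      · exact (h2 (show x ∈ {y : Ordinal × Ordinal | y ∈ q'.1.carrier ∧ lam ≤ y.1} from
          ⟨hx, h⟩)).1
    · intro h
      exact ⟨fun x hx => ⟨h hx.1, hx.2⟩, fun x hx => ⟨h hx.1, hx.2⟩⟩
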